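/- The discrete diffusion matrix Q(h) with entries Q(h)_{ij} = σ² h^{2q+1-i-j} / ((2q+1-i-j)(q-i)!(q-j)!) is symmetric and positive semidefinite for every h ≥ 0. -/

import Mathlib

private lemma gram_term_integral (c d : ℝ) (a b : ℕ) (h : ℝ) :
    ∫ t in (0:ℝ)..h, (c * t ^ a / a.factorial) * (d * t ^ b / b.factorial)
      = c * d * h ^ (a + b + 1) / (((a + b + 1) * a.factorial * b.factorial : ℕ) : ℝ) := by
  have key : ∀ t : ℝ, (c * t ^ a / a.factorial) * (d * t ^ b / b.factorial)
      = (c * d / (a.factorial * b.factorial)) * t ^ (a + b) := by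
    intro t; rw [pow_add]; ring
  simp only [key]
  rw [intervalIntegral.integral_const_mul, integral_pow]
  push_cast
  rw [zero_pow (by omega : a + b + 1 ≠ 0), sub_zero]
  have ha : (a.factorial : ℝ) ≠ 0 := Nat.cast_ne_zero.mpr a.factorial_ne_zero
  have hb : (b.factorial : ℝ) ≠ 0 := Nat.cast_ne_zero.mpr b.factorial_ne_zero
  have hab : ((a : ℝ) + b + 1) ≠ 0 := by positivity
  field_simp

theorem iwp_diffusion_symm_posSemidef (q : ℕ) (σ : ℝ) (hσ : 0 < σ)
    (Q : ℝ → Matrix (Fin (q + 1)) (Fin (q + 1)) ℝ)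
    (hQ : ∀ (h : ℝ) (i j : Fin (q + 1)),
      Q h i j = σ ^ 2 * h ^ (2 * q + 1 - (i : ℕ) - (j : ℕ)) /
        (((2 * q + 1 - (i : ℕ) - (j : ℕ)) * (q - (i : ℕ)).factorial *
          (q - (j : ℕ)).factorial : ℕ) : ℝ)) :
    ∀ h : ℝ, 0 ≤ h → (Q h).IsSymm ∧ (Q h).PosSemidef := by
  intro h hh
  have hsymm : (Q h).IsSymm := by
    ext i j
    rw [Matrix.transpose_apply, hQ, hQ]
    have e : 2 * q + 1 - (j : ℕ) - (i : ℕ) = 2 * q + 1 - (i : ℕ) - (j : ℕ) := by omega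
    rw [e, Nat.mul_right_comm]
  refine ⟨hsymm, Matrix.PosSemidef.of_dotProduct_mulVec_nonneg hsymm ?_⟩
  intro x
  set f : Fin (q + 1) → ℝ → ℝ :=
    fun i t => x i * t ^ (q - (i : ℕ)) / (q - (i : ℕ)).factorial with hf
  have hcont : ∀ i : Fin (q + 1), Continuous (f i) := by
    intro i; simp only [hf]; fun_prop
  have key : dotProduct (star x) ((Q h).mulVec x)
      = σ ^ 2 * ∫ t in (0:ℝ)..h, (∑ i, f i t) ^ 2 := by
    have hint : ∫ t in (0:ℝ)..h, (∑ i, f i t) ^ 2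
        = ∑ i, ∑ j, ∫ t in (0:ℝ)..h, f i t * f j t := by
      have hsq : ∀ t : ℝ, (∑ i, f i t) ^ 2 = ∑ i, ∑ j, f i t * f j t := by
        intro t; rw [sq, Finset.sum_mul_sum]
      simp only [hsq]
      rw [intervalIntegral.integral_finset_sum]
      · refine Finset.sum_congr rfl fun i _ => ?_
        rw [intervalIntegral.integral_finset_sum]
        intro j _
        exact ((hcont i).mul (hcont j)).intervalIntegrable _ _
      · intro i _
        exact (continuous_finset_sum _ fun j _ => (hcont i).mul (hcont j)).intervalIntegrable _ _
    rw [hint, Finset.mul_sum]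
    rw [dotProduct]
    refine Finset.sum_congr rfl fun i _ => ?_
    rw [Matrix.mulVec, dotProduct, Finset.mul_sum, Finset.mul_sum]
    refine Finset.sum_congr rfl fun j _ => ?_
    have hterm : ∫ t in (0:ℝ)..h, f i t * f j t
        = x i * x j * h ^ ((q - (i : ℕ)) + (q - (j : ℕ)) + 1) /
          ((((q - (i : ℕ)) + (q - (j : ℕ)) + 1) * (q - (i : ℕ)).factorial *
            (q - (j : ℕ)).factorial : ℕ) : ℝ) := by
      simp only [hf]
      exact gram_term_integral (x i) (x j) (q - (i : ℕ)) (q - (j : ℕ)) h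
    have e1 : 2 * q + 1 - (i : ℕ) - (j : ℕ) = (q - (i : ℕ)) + (q - (j : ℕ)) + 1 := by
      omega
    rw [hterm, hQ, e1]
    simp only [Pi.star_apply, star_trivial]
    ring
  rw [key]
  apply mul_nonneg (sq_nonneg σ)
  exact intervalIntegral.integral_nonneg hh fun u _ => sq_nonneg _
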